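/- Every positive integer n has a positive multiple that is a Fibternary number. -/

import Mathlib

/-- A natural number is Fibternary if all its base-3 digits are 0 or 1 and no
    two consecutive base-3 digits are both 1. -/
def Fibternary (n : ℕ) : Prop :=
  (∀ d ∈ Nat.digits 3 n, d = 0 ∨ d = 1) ∧
  ∀ i : ℕ, ¬((Nat.digits 3 n).getD i 0 = 1 ∧ (Nat.digits 3 n).getD (i + 1) 0 = 1)

/-- g k = 1 + 9 + 81 + ... + 9^(k-1) -/
def fibG : ℕ → ℕ
  | 0 => 0
  | k + 1 => 9 * fibG k + 1

lemma fibG_closed (a : ℕ) : 8 * fibG a + 1 = 9 ^ a := by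
  induction a with
  | zero => rfl
  | succ a ih =>
    have : fibG (a + 1) = 9 * fibG a + 1 := rfl
    rw [this, pow_succ]
    nlinarith [ih]

lemma fibG_split (a t : ℕ) : fibG (a + t) = fibG a + 9 ^ a * fibG t := by
  induction t with
  | zero => simp [fibG]
  | succ t ih =>
    have h1 : fibG (a + (t + 1)) = 9 * fibG (a + t) + 1 := rfl
    have h2 : fibG (t + 1) = 9 * fibG t + 1 := rfl
    have h8 := fibG_closed a
    rw [h1, ih, h2]
    nlinarith [h8]

lemma fibG_pos {t : ℕ} (ht : 0 < t) : 0 < fibG t := by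
  cases t with
  | zero => omega
  | succ t => show 0 < 9 * fibG t + 1; omega

/-- Good lists: digits 0/1 and 1s only at even positions. -/
def GoodL (l : List ℕ) : Prop :=
  (∀ d ∈ l, d = 0 ∨ d = 1) ∧ ∀ i : ℕ, l.getD i 0 = 1 → Even i

lemma goodL_cons10 {l : List ℕ} (h : GoodL l) : GoodL (1 :: 0 :: l) := by
  obtain ⟨h1, h2⟩ := h
  constructor
  · intro d hd
    simp only [List.mem_cons] at hd
    rcases hd with h | h | h
    · omega
    · omega
    · exact h1 d h
  · intro i hi
    match i with
    | 0 => exact Even.zero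
    | 1 => simp [List.getD] at hi
    | (j + 2) =>
      have : l.getD j 0 = 1 := by simpa [List.getD] using hi
      obtain ⟨c, hc⟩ := h2 j this
      exact ⟨c + 1, by omega⟩

lemma goodL_cons00 {l : List ℕ} (h : GoodL l) : GoodL (0 :: 0 :: l) := by
  obtain ⟨h1, h2⟩ := h
  constructor
  · intro d hd
    simp only [List.mem_cons] at hd
    rcases hd with h | h | h
    · omega
    · omega
    · exact h1 d h
  · intro i hi
    match i with
    | 0 => exact Even.zero
    | 1 => simp [List.getD] at hi
    | (j + 2) =>
      have : l.getD j 0 = 1 := by simpa [List.getD] using hi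
      obtain ⟨c, hc⟩ := h2 j this
      exact ⟨c + 1, by omega⟩

lemma digits_nine_mul {x : ℕ} (hx : 0 < x) :
    Nat.digits 3 (9 * x) = 0 :: 0 :: Nat.digits 3 x := by
  have h1 : Nat.digits 3 (9 * x) = (9 * x) % 3 :: Nat.digits 3 ((9 * x) / 3) :=
    Nat.digits_def' (by norm_num) (by omega)
  have h2 : (9 * x) % 3 = 0 := by omega
  have h3 : (9 * x) / 3 = 3 * x := by omega
  have h4 : Nat.digits 3 (3 * x) = (3 * x) % 3 :: Nat.digits 3 ((3 * x) / 3) :=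
    Nat.digits_def' (by norm_num) (by omega)
  have h5 : (3 * x) % 3 = 0 := by omega
  have h6 : (3 * x) / 3 = x := by omega
  rw [h1, h2, h3, h4, h5, h6]

lemma good_fibG (k : ℕ) : GoodL (Nat.digits 3 (fibG k)) := by
  induction k with
  | zero =>
    constructor
    · intro d hd; simp [fibG] at hd
    · intro i hi; simp [fibG, List.getD] at hi
  | succ k ih =>
    by_cases hk : fibG k = 0
    · have : fibG (k + 1) = 1 := by show 9 * fibG k + 1 = 1; omega
      rw [this]
      constructor
      · intro d hd; simp at hd; omega
      · intro i hi
        match i with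
        | 0 => exact Even.zero
        | (j + 1) => simp [List.getD] at hi
    · have hk' : 0 < fibG k := Nat.pos_of_ne_zero hk
      have h1 : fibG (k + 1) = 9 * fibG k + 1 := rfl
      have h2 : Nat.digits 3 (9 * fibG k + 1)
          = (9 * fibG k + 1) % 3 :: Nat.digits 3 ((9 * fibG k + 1) / 3) :=
        Nat.digits_def' (by norm_num) (by omega)
      have h3 : (9 * fibG k + 1) % 3 = 1 := by omega
      have h4 : (9 * fibG k + 1) / 3 = 3 * fibG k := by omega
      have h5 : Nat.digits 3 (3 * fibG k)
          = (3 * fibG k) % 3 :: Nat.digits 3 ((3 * fibG k) / 3) :=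
        Nat.digits_def' (by norm_num) (by omega)
      have h6 : (3 * fibG k) % 3 = 0 := by omega
      have h7 : (3 * fibG k) / 3 = fibG k := by omega
      rw [h1, h2, h3, h4, h5, h6, h7]
      exact goodL_cons10 ih

lemma good_pow_mul (a x : ℕ) (hx : GoodL (Nat.digits 3 x)) :
    GoodL (Nat.digits 3 (9 ^ a * x)) := by
  induction a with
  | zero => simpa using hx
  | succ a ih =>
    by_cases h : 9 ^ a * x = 0
    · have : 9 ^ (a + 1) * x = 0 := by
        rw [pow_succ]
        have : 9 ^ a = 0 ∨ x = 0 := by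
          rcases Nat.mul_eq_zero.mp h with h' | h'
          · exact Or.inl h'
          · exact Or.inr h'
        rcases this with h' | h' <;> simp [h', mul_assoc]
      rw [this]
      constructor
      · intro d hd; simp at hd
      · intro i hi; simp [List.getD] at hi
    · have hpos : 0 < 9 ^ a * x := Nat.pos_of_ne_zero h
      have : 9 ^ (a + 1) * x = 9 * (9 ^ a * x) := by ring
      rw [this, digits_nine_mul hpos]
      exact goodL_cons00 ih

lemma good_fibternary {m : ℕ} (h : GoodL (Nat.digits 3 m)) : Fibternary m := by
  obtain ⟨h1, h2⟩ := h
  refine ⟨h1, fun i ⟨hi, hi1⟩ => ?_⟩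
  have e1 := h2 i hi
  have e2 := h2 (i + 1) hi1
  rcases e1 with ⟨a, ha⟩
  rcases e2 with ⟨b, hb⟩
  omega

/-- Every positive integer has a positive Fibternary multiple. -/
theorem exists_fibternary_multiple (n : ℕ) (hn : 0 < n) :
    ∃ m : ℕ, 0 < m ∧ n ∣ m ∧ Fibternary m := by
  -- pigeonhole on fibG k % n
  have hmaps : ∀ k ∈ Finset.range (n + 1), fibG k % n ∈ Finset.range n := by
    intro k _
    exact Finset.mem_range.mpr (Nat.mod_lt _ hn)
  have hcard : (Finset.range n).card < (Finset.range (n + 1)).card := by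
    simp
  obtain ⟨a, _, b, _, hne, heq⟩ :=
    Finset.exists_ne_map_eq_of_card_lt_of_maps_to hcard hmaps
  -- wlog a < b
  wlog hab : a < b generalizing a b
  · exact this b ‹_› a ‹_› hne.symm heq.symm (by omega)
  set t := b - a with ht
  have htpos : 0 < t := by omega
  have hb' : b = a + t := by omega
  have hsplit : fibG b = fibG a + 9 ^ a * fibG t := by
    rw [hb']; exact fibG_split a t
  refine ⟨9 ^ a * fibG t, ?_, ?_, ?_⟩
  · exact Nat.mul_pos (Nat.pow_pos (by norm_num)) (fibG_pos htpos)
  · have hmod : fibG a % n = fibG b % n := heq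
    have : n ∣ fibG b - fibG a :=
      (Nat.modEq_iff_dvd' (by omega : fibG a ≤ fibG b)).mp hmod
    have hdiff : fibG b - fibG a = 9 ^ a * fibG t := by omega
    rwa [hdiff] at this
  · exact good_fibternary (good_pow_mul a (fibG t) (good_fibG t))
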